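/- Let a ∈ V^k and b ∈ V^{k'} with stp(a,a) = stp(b,b), let π_S : S(a) → S(b) be the bijection with stp(a,s) = stp(b,π_S(s)) for all slices s of a, and suppose c, d ∈ V^* are tuples with stp(a,c) = stp(b,d). Then for every slice s of a that is also a slice of c, the slice t := π_S(s) is a slice of d, and stp(s,c) = stp(t,d). -/

import Mathlib

/-- The similarity type of two tuples (represented as lists). -/
def stpL {V : Type*} (x y : List V) : Set (ℕ × ℕ) :=
  {p | ∃ (h1 : p.1 < x.length) (h2 : p.2 < y.length), x.get ⟨p.1, h1⟩ = y.get ⟨p.2, h2⟩}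

/-- `s` is a slice of `t`: nonempty, pairwise distinct entries, entries among those of `t`. -/
def sliceOf {V : Type*} (s t : List V) : Prop :=
  s ≠ [] ∧ s.Nodup ∧ ∀ x ∈ s, x ∈ t

lemma mem_stpL {V : Type*} {x y : List V} {i j : ℕ} :
    (i, j) ∈ stpL x y ↔ ∃ (h1 : i < x.length) (h2 : j < y.length),
      x.get ⟨i, h1⟩ = y.get ⟨j, h2⟩ := Iff.rfl

/-- If `stp(a,a) = stp(b,b)`, `π` is the bijection between slices of `a` and slices of `b`
with `stp(a,s) = stp(b,π(s))`, and `c, d` are tuples with `stp(a,c) = stp(b,d)`, then for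
every slice `s` of `a` that is also a slice of `c`, the slice `t := π(s)` is a slice of `d`
and `stp(s,c) = stp(t,d)`. -/
theorem stmt17 {V : Type*} (a b c d : List V)
    (hab : stpL a a = stpL b b)
    (π : {s : List V // sliceOf s a} → {s : List V // sliceOf s b})
    (hbij : Function.Bijective π)
    (hπ : ∀ s, stpL a s.val = stpL b (π s).val)
    (hcd : stpL a c = stpL b d) :
    ∀ s : {s : List V // sliceOf s a}, sliceOf s.val c →
      sliceOf (π s).val d ∧ stpL s.val c = stpL (π s).val d := by
  intro s hsc
  set t := (π s).val with ht
  have hπs := hπ s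
  have hsa : sliceOf s.val a := s.2
  have htb : sliceOf t b := (π s).2
  constructor
  · refine ⟨htb.1, htb.2.1, ?_⟩
    intro x hx
    obtain ⟨⟨j, hj⟩, rfl⟩ := List.mem_iff_get.mp hx
    -- t_j ∈ b, so ∃ i, b_i = t_j
    obtain ⟨⟨i, hi⟩, hbi⟩ := List.mem_iff_get.mp (htb.2.2 _ (List.get_mem t ⟨j, hj⟩))
    have h1 : (i, j) ∈ stpL a s.val := by
      rw [hπs]; exact ⟨hi, hj, hbi⟩
    obtain ⟨hi', hj', hasj⟩ := h1
    -- s_j ∈ c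
    obtain ⟨⟨p, hp⟩, hcp⟩ := List.mem_iff_get.mp (hsc.2.2 _ (List.get_mem s.val ⟨j, hj'⟩))
    have h2 : (i, p) ∈ stpL a c := ⟨hi', hp, by rw [hasj, hcp]⟩
    rw [hcd] at h2
    obtain ⟨hi'', hp', hbd⟩ := h2
    rw [List.mem_iff_get]
    exact ⟨⟨p, hp'⟩, by rw [← hbd]; exact (hbi).symm ▸ rfl⟩
  · ext ⟨j, p⟩
    simp only [mem_stpL]
    constructor
    · rintro ⟨hj, hp, hsj⟩
      obtain ⟨⟨i, hi⟩, hai⟩ := List.mem_iff_get.mp (hsa.2.2 _ (List.get_mem s.val ⟨j, hj⟩))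
      have h1 : (i, j) ∈ stpL a s.val := ⟨hi, hj, hai⟩
      rw [hπs] at h1
      obtain ⟨hi', hj', hbt⟩ := h1
      have h2 : (i, p) ∈ stpL a c := ⟨hi, hp, by rw [hai, hsj]⟩
      rw [hcd] at h2
      obtain ⟨hi'', hp', hbd⟩ := h2
      exact ⟨hj', hp', by rw [← hbt, ← hbd]⟩
    · rintro ⟨hj, hp, htj⟩
      obtain ⟨⟨i, hi⟩, hbi⟩ := List.mem_iff_get.mp (htb.2.2 _ (List.get_mem t ⟨j, hj⟩))
      have h1 : (i, j) ∈ stpL a s.val := by rw [hπs]; exact ⟨hi, hj, hbi⟩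
      obtain ⟨hi', hj', hasj⟩ := h1
      have h2 : (i, p) ∈ stpL b d := ⟨hi, hp, by rw [hbi, htj]⟩
      rw [← hcd] at h2
      obtain ⟨hi'', hp', hac⟩ := h2
      refine ⟨hj', hp', ?_⟩
      rw [← hasj]
      rw [show (⟨i, hi'⟩ : Fin a.length) = ⟨i, hi''⟩ from rfl] at hasj ⊢
      exact hac
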